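/- (Theorem 2: interpolation of the p-adic twisted (h,q)-Euler-ℓ-function at negative integers.) The three limits defining E^{(h)}_{n,q,ξ,ψ}, E^{(h)}_{n,q^p,ξ^p,ψ}, and the value l^{(h)}_{p,q,ξ}(−n, ψ) := lim_{N→∞} ((1+q)/(1+q^{dp^N})) Σ_{0 ≤ a < dp^N, p ∤ a} ψ(a) q^{(h−1)a} ξ^a [a]_q^n (−q)^a (the fermionic integral ∫_{X*} ψ(t) q^{(h−1)t} ξ^t [t]_q^n dμ_{−q}(t) over X* = X \ pX) all exist in K, and l^{(h)}_{p,q,ξ}(−n, ψ) = E^{(h)}_{n,q,ξ,ψ} − ψ(p) · [p]_q^n · ((1+q)/(1+q^p)) · E^{(h)}_{n,q^p,ξ^p,ψ}. (Taking ψ = χ_n, the primitive character attached to χω^{−n}, this is l^{(h)}_{p,q,ξ}(−n, χ) = E^{(h)}_{n,q,ξ,χ_n} − χ_n(p)[p]_q^n([2]_q/[2]_{q^p})E^{(h)}_{n,q^p,ξ^p,χ_n}.) -/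

import Mathlib

open Filter IsUltrametricDist

section PTHQHelpers

variable {K : Type*} [NormedField K] [IsUltrametricDist K]

private lemma PTHQ.norm_one_sub_pow_le {u : K} (hu : ‖u‖ ≤ 1) (k : ℕ) :
    ‖1 - u ^ k‖ ≤ ‖1 - u‖ := by
  have h1 : 1 - u ^ k = (∑ i ∈ Finset.range k, u ^ i) * (1 - u) := by
    linear_combination geom_sum_mul u k
  rw [h1, norm_mul]
  have h2 : ‖∑ i ∈ Finset.range k, u ^ i‖ ≤ 1 :=
    norm_sum_le_of_forall_le_of_nonneg zero_le_one fun i _ => by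
      rw [norm_pow]; exact pow_le_one₀ (norm_nonneg u) hu
  calc ‖∑ i ∈ Finset.range k, u ^ i‖ * ‖1 - u‖ ≤ 1 * ‖1 - u‖ :=
        mul_le_mul_of_nonneg_right h2 (norm_nonneg _)
    _ = ‖1 - u‖ := one_mul _

private lemma PTHQ.norm_zpow_sub_one_le {u : K} (hu : ‖u‖ = 1) (z : ℤ) :
    ‖u ^ z - 1‖ ≤ ‖1 - u‖ := by
  have hu0 : u ≠ 0 := by intro hh; rw [hh, norm_zero] at hu; norm_num at hu
  obtain ⟨k, rfl | rfl⟩ := z.eq_nat_or_neg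
  · rw [zpow_natCast, norm_sub_rev]; exact PTHQ.norm_one_sub_pow_le hu.le k
  · have hrw : u ^ (-(k : ℤ)) - 1 = u ^ (-(k : ℤ)) * (1 - u ^ k) := by
      rw [mul_sub, mul_one, ← zpow_natCast u k, ← zpow_add₀ hu0]
      simp
    rw [hrw, norm_mul, norm_zpow, hu, one_zpow, one_mul]
    exact PTHQ.norm_one_sub_pow_le hu.le k

private lemma PTHQ.norm_pow_sub_pow_le {x y : K} (hx : ‖x‖ ≤ 1) (hy : ‖y‖ ≤ 1) (n : ℕ) :
    ‖x ^ n - y ^ n‖ ≤ ‖x - y‖ := by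
  induction n with
  | zero => simp
  | succ n ih =>
    have h1 : x ^ (n + 1) - y ^ (n + 1) = x ^ n * (x - y) + (x ^ n - y ^ n) * y := by ring
    rw [h1]
    refine le_trans (norm_add_le_max _ _) (max_le ?_ ?_)
    · rw [norm_mul, norm_pow]
      calc ‖x‖ ^ n * ‖x - y‖ ≤ 1 * ‖x - y‖ :=
            mul_le_mul_of_nonneg_right (pow_le_one₀ (norm_nonneg x) hx) (norm_nonneg _)
        _ = ‖x - y‖ := one_mul _
    · rw [norm_mul]
      calc ‖x ^ n - y ^ n‖ * ‖y‖ ≤ ‖x - y‖ * 1 :=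
            mul_le_mul ih hy (norm_nonneg _) (norm_nonneg _)
        _ = ‖x - y‖ := mul_one _

private lemma PTHQ.sum_range_mul {M : Type*} [AddCommMonoid M] (f : ℕ → M) (D k : ℕ) :
    ∑ a ∈ Finset.range (D * k), f a
      = ∑ i ∈ Finset.range k, ∑ a ∈ Finset.range D, f (D * i + a) := by
  induction k with
  | zero => simp
  | succ k ih =>
    rw [Nat.mul_succ, Finset.sum_range_add, ih, Finset.sum_range_succ]

private lemma PTHQ.norm_eq_one {q : K} (hlt : ‖1 - q‖ < 1) : ‖q‖ = 1 := by
  have h1 : ‖q - 1‖ < ‖(1 : K)‖ := by rw [norm_one, norm_sub_rev]; exact hlt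
  have h2 := norm_add_eq_max_of_norm_ne_norm (x := (1 : K)) (y := q - 1) h1.ne'
  have h3 : (1 : K) + (q - 1) = q := by ring
  rw [h3, max_eq_left h1.le, norm_one] at h2
  exact h2

private lemma PTHQ.step {p : ℕ} (hp : p.Prime)
    (hnorm1 : ∀ k : ℕ, ‖(k : K)‖ ≤ 1) (hnormp : ‖(p : K)‖ ≤ (p : ℝ)⁻¹)
    {w : K} {ε : ℝ} (hε1 : ε ≤ 1) (hεp : ε ^ (p - 1) ≤ (p : ℝ)⁻¹)
    (hwe : ‖w - 1‖ ≤ ε) : ‖w ^ p - 1‖ ≤ (p : ℝ)⁻¹ * ‖w - 1‖ := by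
  set z := w - 1 with hz
  have hzn : ‖z‖ ≤ ε := hwe
  have hz1 : ‖z‖ ≤ 1 := hzn.trans hε1
  have hp0 : (0 : ℝ) ≤ (p : ℝ)⁻¹ := by positivity
  have expand : w ^ p - 1 = ∑ k ∈ Finset.range p, z ^ (k + 1) * (p.choose (k + 1) : K) := by
    have hw : w = z + 1 := by rw [hz]; ring
    rw [hw, add_pow, Finset.sum_range_succ']
    simp [Nat.choose_zero_right]
  rw [expand]
  refine norm_sum_le_of_forall_le_of_nonneg (by positivity) fun k hk => ?_
  rw [Finset.mem_range] at hk
  rw [norm_mul, norm_pow]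
  by_cases hkp : k + 1 = p
  · have hone : p.choose (k + 1) = 1 := by rw [hkp, Nat.choose_self]
    rw [hone]
    simp only [Nat.cast_one, norm_one, mul_one]
    have hk' : k = p - 1 := by omega
    calc ‖z‖ ^ (k + 1) = ‖z‖ ^ k * ‖z‖ := pow_succ _ _
      _ ≤ (p : ℝ)⁻¹ * ‖z‖ := by
          refine mul_le_mul_of_nonneg_right ?_ (norm_nonneg _)
          calc ‖z‖ ^ k ≤ ε ^ k := pow_le_pow_left₀ (norm_nonneg _) hzn k
            _ = ε ^ (p - 1) := by rw [hk']
            _ ≤ (p : ℝ)⁻¹ := hεp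
  · obtain ⟨t, ht⟩ := Nat.Prime.dvd_choose_self hp (Nat.succ_ne_zero k) (by omega)
    rw [ht]
    push_cast
    rw [norm_mul]
    calc ‖z‖ ^ (k + 1) * (‖(p : K)‖ * ‖(t : K)‖)
        ≤ ‖z‖ * ((p : ℝ)⁻¹ * 1) := by
          refine mul_le_mul (pow_le_of_le_one (norm_nonneg _) hz1 (Nat.succ_ne_zero k)) ?_
            (by positivity) (norm_nonneg _)
          exact mul_le_mul hnormp (hnorm1 t) (norm_nonneg _) hp0
      _ = (p : ℝ)⁻¹ * ‖z‖ := by ring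

private lemma PTHQ.decay {p d : ℕ} (hp : p.Prime)
    (hnorm1 : ∀ k : ℕ, ‖(k : K)‖ ≤ 1) (hnormp : ‖(p : K)‖ ≤ (p : ℝ)⁻¹)
    {q : K} {ε : ℝ} (hqe : ‖1 - q‖ ≤ ε) (hqn : ‖q‖ ≤ 1)
    (hε1 : ε ≤ 1) (hεp : ε ^ (p - 1) ≤ (p : ℝ)⁻¹) :
    ∀ N : ℕ, ‖1 - q ^ (d * p ^ N)‖ ≤ ε * ((p : ℝ)⁻¹) ^ N := by
  intro N
  induction N with
  | zero => simpa using (PTHQ.norm_one_sub_pow_le hqn d).trans hqe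
  | succ N ih =>
    have hw : q ^ (d * p ^ (N + 1)) = (q ^ (d * p ^ N)) ^ p := by
      rw [← pow_mul]; ring_nf
    have hip : (0 : ℝ) ≤ (p : ℝ)⁻¹ := by positivity
    have hε0 : (0 : ℝ) ≤ ε := (norm_nonneg _).trans hqe
    have hle : ‖q ^ (d * p ^ N) - 1‖ ≤ ε := by
      rw [norm_sub_rev]
      exact ih.trans (mul_le_of_le_one_right hε0 (pow_le_one₀ hip (by
        rw [inv_le_one_iff₀]; right; exact_mod_cast hp.one_lt.le)))
    have hstep := PTHQ.step hp hnorm1 hnormp hε1 hεp hle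
    rw [hw, norm_sub_rev]
    calc ‖(q ^ (d * p ^ N)) ^ p - 1‖ ≤ (p : ℝ)⁻¹ * ‖q ^ (d * p ^ N) - 1‖ := hstep
      _ ≤ (p : ℝ)⁻¹ * (ε * ((p : ℝ)⁻¹) ^ N) := by
          refine mul_le_mul_of_nonneg_left ?_ hip
          rw [norm_sub_rev]; exact ih
      _ = ε * ((p : ℝ)⁻¹) ^ (N + 1) := by ring

end PTHQHelpers

/-- The summand of the fermionic integral Riemann sums. -/
private def PTHQ.g {K : Type*} [NormedField K] (ψ : ℤ → K) (q ξ : K) (h : ℤ) (n : ℕ)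
    (a : ℕ) : K :=
  ψ (a : ℤ) * q ^ ((h - 1) * (a : ℤ)) * ξ ^ a * ((1 - q ^ a) / (1 - q)) ^ n * (-q) ^ a

/-- The raw Riemann sums. -/
private def PTHQ.S {K : Type*} [NormedField K] (ψ : ℤ → K) (q ξ : K) (h : ℤ) (n : ℕ)
    (d p : ℕ) (N : ℕ) : K :=
  ∑ a ∈ Finset.range (d * p ^ N), PTHQ.g ψ q ξ h n a

private lemma PTHQ.key {K : Type*} [NormedField K] [IsUltrametricDist K]
    {p d m : ℕ} (hp : Odd p) (hd : Odd d)
    (q ξ : K) (hqnorm : ‖q‖ = 1) (hξm : ξ ^ p ^ m = 1) (hξn : ‖ξ‖ = 1) (h : ℤ) (n : ℕ)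
    (ψ : ℤ → K) (B : ℝ) (hB : ∀ a : ℤ, ‖ψ a‖ ≤ B)
    (hperk : ∀ (a : ℤ) (k : ℕ), ψ (a + (d * p : ℕ) * k) = ψ a)
    {η : ℝ} (hη0 : 0 ≤ η) (hε1 : ‖1 - q‖ ≤ 1)
    (hdec : ∀ N : ℕ, ‖1 - q ^ (d * p ^ N)‖ ≤ ‖1 - q‖ * η ^ N)
    (N : ℕ) (hmN : m ≤ N) (h1N : 1 ≤ N) :
    ‖PTHQ.S ψ q ξ h n d p (N + 1) - PTHQ.S ψ q ξ h n d p N‖ ≤ B * η ^ N := by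
  have hq0 : q ≠ 0 := by intro hh; rw [hh, norm_zero] at hqnorm; norm_num at hqnorm
  have hB0 : (0 : ℝ) ≤ B := (norm_nonneg _).trans (hB 0)
  set D := d * p ^ N with hD
  have hξD : ξ ^ D = 1 := by
    obtain ⟨t, ht⟩ : p ^ m ∣ D := Dvd.dvd.mul_left (pow_dvd_pow p hmN) d
    rw [ht, pow_mul, hξm, one_pow]
  have hDodd : Odd D := hd.mul (hp.pow)
  have hsplit : PTHQ.S ψ q ξ h n d p (N + 1)
      = ∑ a ∈ Finset.range D, ∑ i ∈ Finset.range p, PTHQ.g ψ q ξ h n (D * i + a) := by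
    have hDp : d * p ^ (N + 1) = D * p := by rw [hD, pow_succ]; ring
    rw [PTHQ.S, hDp, PTHQ.sum_range_mul, Finset.sum_comm]
  have hodd' : ¬ Even p := Nat.not_even_iff_odd.mpr hp
  have hdelta : PTHQ.S ψ q ξ h n d p (N + 1) - PTHQ.S ψ q ξ h n d p N
      = ∑ a ∈ Finset.range D, ∑ i ∈ Finset.range p,
          (PTHQ.g ψ q ξ h n (D * i + a) - (-1 : K) ^ i * PTHQ.g ψ q ξ h n a) := by
    rw [hsplit, PTHQ.S, ← hD, ← Finset.sum_sub_distrib]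
    refine Finset.sum_congr rfl fun a _ => ?_
    rw [Finset.sum_sub_distrib, ← Finset.sum_mul, neg_one_geom_sum, if_neg hodd', one_mul]
  rw [hdelta]
  have hBη : (0 : ℝ) ≤ B * η ^ N := mul_nonneg hB0 (pow_nonneg hη0 N)
  refine norm_sum_le_of_forall_le_of_nonneg hBη fun a _ => ?_
  refine norm_sum_le_of_forall_le_of_nonneg hBη fun i hi => ?_
  -- per-term estimate
  set X : K := (1 - q ^ a) / (1 - q) with hX
  set T : K := q ^ a * ((1 - q ^ (D * i)) / (1 - q)) with hT
  set w : K := q ^ D with hw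
  have hwn : ‖w‖ = 1 := by rw [hw, norm_pow, hqnorm, one_pow]
  have hw0 : w ≠ 0 := by rw [hw]; exact pow_ne_zero D hq0
  have hwdist : ‖1 - w‖ ≤ ‖1 - q‖ * η ^ N := hdec N
  set A : K := q ^ ((h - 1) * (a : ℤ)) with hA
  set W1 : K := w ^ ((h - 1) * (i : ℤ)) with hW1
  set Wz : K := w ^ ((h - 1) * (i : ℤ) + (i : ℤ)) with hWz
  have hcast : ((D * i + a : ℕ) : ℤ) = (a : ℤ) + (D : ℤ) * (i : ℤ) := by push_cast; ring
  have hψeq : ψ ((D * i + a : ℕ) : ℤ) = ψ (a : ℤ) := by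
    rw [hcast]
    obtain ⟨N', rfl⟩ : ∃ N', N = N' + 1 := ⟨N - 1, by omega⟩
    have hre : (D : ℤ) * (i : ℤ) = ((d * p : ℕ) : ℤ) * ((p ^ N' * i : ℕ) : ℤ) := by
      rw [hD]; push_cast [pow_succ]; ring
    rw [hre]
    exact hperk _ _
  have hξeq : ξ ^ (D * i + a) = ξ ^ a := by
    rw [pow_add, pow_mul, hξD, one_pow, one_mul]
  have hqzpow : q ^ ((h - 1) * ((D * i + a : ℕ) : ℤ)) = A * W1 := by
    rw [hcast]
    have hexp : (h - 1) * ((a : ℤ) + (D : ℤ) * (i : ℤ))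
        = (h - 1) * (a : ℤ) + (D : ℤ) * ((h - 1) * (i : ℤ)) := by ring
    have hzz : q ^ ((D : ℤ) * ((h - 1) * (i : ℤ))) = W1 := by
      rw [zpow_mul q ((D : ℤ)) ((h - 1) * (i : ℤ)), zpow_natCast, hW1, hw]
    rw [hexp, zpow_add₀ hq0, hzz, hA]
  have hnegq : (-q) ^ (D * i + a) = (-q) ^ a * ((-1 : K) ^ i * w ^ i) := by
    rw [pow_add, pow_mul, hDodd.neg_pow, neg_pow]
    ring
  have hdivsplit : (1 - q ^ (D * i + a)) / (1 - q) = X + T := by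
    have hnum : 1 - q ^ (D * i + a) = (1 - q ^ a) + q ^ a * (1 - q ^ (D * i)) := by
      rw [pow_add]; ring
    rw [hnum, add_div, hX, hT, mul_div_assoc]
  have hWzsplit : Wz = W1 * w ^ i := by
    rw [hWz, zpow_add₀ hw0, zpow_natCast, hW1]
  have hgsplit : PTHQ.g ψ q ξ h n (D * i + a)
      = ψ (a : ℤ) * A * ξ ^ a * (-q) ^ a * ((-1 : K) ^ i * (Wz * (X + T) ^ n)) := by
    rw [PTHQ.g, hψeq, hξeq, hqzpow, hnegq, hdivsplit, hWzsplit]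
    ring
  have hkey2 : PTHQ.g ψ q ξ h n (D * i + a) - (-1 : K) ^ i * PTHQ.g ψ q ξ h n a
      = ψ (a : ℤ) * A * ξ ^ a * (-q) ^ a * (-1 : K) ^ i * (Wz * (X + T) ^ n - X ^ n) := by
    rw [hgsplit, PTHQ.g, ← hA, ← hX]
    ring
  rw [hkey2]
  have hnorms : ‖ψ (a : ℤ) * A * ξ ^ a * (-q) ^ a * (-1 : K) ^ i * (Wz * (X + T) ^ n - X ^ n)‖
      = ‖ψ (a : ℤ)‖ * ‖Wz * (X + T) ^ n - X ^ n‖ := by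
    simp only [hA, norm_mul, norm_zpow, norm_pow, norm_neg, norm_one, hqnorm, hξn,
      one_zpow, one_pow, mul_one, one_mul]
  rw [hnorms]
  have hWbound : ‖Wz * (X + T) ^ n - X ^ n‖ ≤ η ^ N := by
    have hX1 : ‖X‖ ≤ 1 := by
      rw [hX, norm_div]
      exact div_le_one_of_le₀ (PTHQ.norm_one_sub_pow_le hqnorm.le a) (norm_nonneg _)
    have hDi : ‖1 - q ^ (D * i)‖ ≤ ‖1 - q‖ * η ^ N := by
      rw [pow_mul]
      exact (PTHQ.norm_one_sub_pow_le (le_of_eq hwn) i).trans hwdist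
    have hT1 : ‖T‖ ≤ 1 := by
      rw [hT, norm_mul, norm_div, norm_pow, hqnorm, one_pow, one_mul]
      exact div_le_one_of_le₀ (PTHQ.norm_one_sub_pow_le hqnorm.le (D * i)) (norm_nonneg _)
    have hTη : ‖T‖ ≤ η ^ N := by
      rw [hT, norm_mul, norm_div, norm_pow, hqnorm, one_pow, one_mul]
      rcases eq_or_lt_of_le (norm_nonneg (1 - q)) with h0 | h0
      · have hz : ‖1 - q ^ (D * i)‖ = 0 := by
          refine le_antisymm (hDi.trans ?_) (norm_nonneg _)
          rw [← h0]; ring_nf; exact le_of_eq (by ring)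
        rw [hz, zero_div]
        positivity
      · rw [div_le_iff₀ h0]
        exact hDi.trans (le_of_eq (mul_comm _ _))
    have hXT : ‖X + T‖ ≤ 1 := (norm_add_le_max _ _).trans (max_le hX1 hT1)
    have hpow : ‖(X + T) ^ n - X ^ n‖ ≤ η ^ N := by
      refine (PTHQ.norm_pow_sub_pow_le hXT hX1 n).trans ?_
      have hXTX : X + T - X = T := by ring
      rw [hXTX]; exact hTη
    have hWz1 : ‖Wz - 1‖ ≤ ‖1 - q‖ * η ^ N := by
      rw [hWz]; exact (PTHQ.norm_zpow_sub_one_le hwn _).trans hwdist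
    have hdecomp : Wz * (X + T) ^ n - X ^ n = (Wz - 1) * (X + T) ^ n + ((X + T) ^ n - X ^ n) := by
      ring
    rw [hdecomp]
    refine (norm_add_le_max _ _).trans (max_le ?_ hpow)
    rw [norm_mul]
    calc ‖Wz - 1‖ * ‖(X + T) ^ n‖ ≤ (‖1 - q‖ * η ^ N) * 1 :=
          mul_le_mul hWz1 (by rw [norm_pow]; exact pow_le_one₀ (norm_nonneg _) hXT)
            (norm_nonneg _) (by positivity)
      _ ≤ η ^ N := by
          rw [mul_one]
          exact mul_le_of_le_one_left (pow_nonneg hη0 N) hε1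
  exact mul_le_mul (hB _) hWbound (norm_nonneg _) hB0

private lemma PTHQ.conv {p : ℕ} (hpp : p.Prime) (hp : Odd p)
    {K : Type*} [NontriviallyNormedField K] [CompleteSpace K] [IsUltrametricDist K]
    (hnorm1 : ∀ k : ℕ, ‖(k : K)‖ ≤ 1) (hnormp : ‖(p : K)‖ ≤ (p : ℝ)⁻¹)
    (hnorm2 : (2 : K) ≠ 0)
    (q ξ : K) (hq : ‖1 - q‖ < (p : ℝ) ^ (-(1 : ℝ) / ((p : ℝ) - 1)))
    (m : ℕ) (hξ : ξ ^ p ^ m = 1) (h : ℤ) (n : ℕ)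
    {d : ℕ} (hd : Odd d) (hdpos : 0 < d)
    (ψ : ℤ → K) (B : ℝ) (hB : ∀ a : ℤ, ‖ψ a‖ ≤ B)
    (hψper : ∀ a : ℤ, ψ (a + (d * p : ℕ)) = ψ a) :
    ∃ E : K, Tendsto (fun N : ℕ => ((1 + q) / (1 + q ^ (d * p ^ N))) *
        PTHQ.S ψ q ξ h n d p N) atTop (nhds E) := by
  have hp1 : (1 : ℝ) < p := by exact_mod_cast hpp.one_lt
  have hη0 : (0 : ℝ) ≤ (p : ℝ)⁻¹ := by positivity
  have hη1 : (p : ℝ)⁻¹ < 1 := by rw [inv_lt_one_iff₀]; right; exact hp1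
  have hbound1 : (p : ℝ) ^ (-(1 : ℝ) / ((p : ℝ) - 1)) ≤ 1 := by
    apply Real.rpow_le_one_of_one_le_of_nonpos hp1.le
    apply div_nonpos_of_nonpos_of_nonneg <;> [norm_num; linarith]
  have hε1 : ‖1 - q‖ < 1 := lt_of_lt_of_le hq hbound1
  have hε0 : (0 : ℝ) ≤ ‖1 - q‖ := norm_nonneg _
  have hεp : ‖1 - q‖ ^ (p - 1) ≤ (p : ℝ)⁻¹ := by
    calc ‖1 - q‖ ^ (p - 1) ≤ ((p : ℝ) ^ (-(1 : ℝ) / ((p : ℝ) - 1))) ^ (p - 1) :=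
          pow_le_pow_left₀ hε0 hq.le _
      _ = (p : ℝ)⁻¹ := by
          rw [← Real.rpow_natCast ((p : ℝ) ^ (-(1 : ℝ) / ((p : ℝ) - 1))) (p - 1),
            ← Real.rpow_mul (by positivity)]
          have hcast : ((p - 1 : ℕ) : ℝ) = (p : ℝ) - 1 := by
            have h1p : 1 ≤ p := hpp.one_lt.le
            push_cast [Nat.cast_sub h1p]
            ring
          have hne : (p : ℝ) - 1 ≠ 0 := by linarith
          have hexp : (-(1 : ℝ) / ((p : ℝ) - 1)) * ((p - 1 : ℕ) : ℝ) = -1 := by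
            rw [hcast]
            exact div_mul_cancel₀ _ hne
          rw [hexp, Real.rpow_neg_one]
  have hqnorm : ‖q‖ = 1 := PTHQ.norm_eq_one hε1
  have hq0 : q ≠ 0 := by intro hh; rw [hh, norm_zero] at hqnorm; norm_num at hqnorm
  have hξn : ‖ξ‖ = 1 := by
    have h1 : ‖ξ‖ ^ (p ^ m) = 1 := by rw [← norm_pow, hξ, norm_one]
    have h2 : p ^ m ≠ 0 := pow_ne_zero m hpp.pos.ne'
    rcases lt_trichotomy ‖ξ‖ 1 with h3 | h3 | h3
    · exfalso
      have := pow_lt_one₀ (norm_nonneg ξ) h3 h2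
      rw [h1] at this; exact lt_irrefl _ this
    · exact h3
    · exfalso
      have := one_lt_pow₀ h3 h2
      rw [h1] at this; exact lt_irrefl _ this
  have hdec : ∀ N : ℕ, ‖1 - q ^ (d * p ^ N)‖ ≤ ‖1 - q‖ * ((p : ℝ)⁻¹) ^ N :=
    PTHQ.decay hpp hnorm1 hnormp le_rfl hqnorm.le hε1.le hεp
  have hB0 : (0 : ℝ) ≤ B := (norm_nonneg _).trans (hB 0)
  have hperk : ∀ (a : ℤ) (k : ℕ), ψ (a + (d * p : ℕ) * k) = ψ a := by
    intro a k
    induction k with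
    | zero => simp
    | succ k ih =>
      have hre : a + ((d * p : ℕ) : ℤ) * ((k : ℤ) + 1)
          = (a + ((d * p : ℕ) : ℤ) * (k : ℤ)) + ((d * p : ℕ) : ℤ) := by ring
      push_cast only [Nat.cast_add, Nat.cast_one] at *
      rw [hre, hψper, ih]
  -- Cauchy sequence
  set N₀ := max m 1 with hN₀
  have hkey : ∀ N : ℕ, m ≤ N → 1 ≤ N →
      ‖PTHQ.S ψ q ξ h n d p (N + 1) - PTHQ.S ψ q ξ h n d p N‖ ≤ B * ((p : ℝ)⁻¹) ^ N :=
    PTHQ.key hp hd q ξ hqnorm hξ hξn h n ψ B hB hperk hη0 hε1.le hdec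
  have hcauchy : CauchySeq (fun N : ℕ => PTHQ.S ψ q ξ h n d p (N + N₀)) := by
    apply cauchySeq_of_le_geometric ((p : ℝ)⁻¹) (B * ((p : ℝ)⁻¹) ^ N₀) hη1
    intro N
    rw [dist_eq_norm, norm_sub_rev]
    calc ‖PTHQ.S ψ q ξ h n d p (N + 1 + N₀) - PTHQ.S ψ q ξ h n d p (N + N₀)‖
        = ‖PTHQ.S ψ q ξ h n d p ((N + N₀) + 1) - PTHQ.S ψ q ξ h n d p (N + N₀)‖ := by
          ring_nf
      _ ≤ B * ((p : ℝ)⁻¹) ^ (N + N₀) :=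
          hkey (N + N₀) (le_trans (le_max_left m 1) (Nat.le_add_left N₀ N))
            (le_trans (le_max_right m 1) (Nat.le_add_left N₀ N))
      _ = B * ((p : ℝ)⁻¹) ^ N₀ * ((p : ℝ)⁻¹) ^ N := by rw [pow_add]; ring
  have hlim := hcauchy.tendsto_limUnder
  have hS : Tendsto (fun N : ℕ => PTHQ.S ψ q ξ h n d p N) atTop
      (nhds (limUnder atTop (fun N : ℕ => PTHQ.S ψ q ξ h n d p (N + N₀)))) :=
    (tendsto_add_atTop_iff_nat N₀).mp hlim
  -- prefactor
  have hden : Tendsto (fun N : ℕ => (1 : K) + q ^ (d * p ^ N)) atTop (nhds 2) := by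
    rw [tendsto_iff_norm_sub_tendsto_zero]
    have hb : ∀ N : ℕ, ‖(1 : K) + q ^ (d * p ^ N) - 2‖ ≤ ‖1 - q‖ * ((p : ℝ)⁻¹) ^ N := by
      intro N
      have hrw : (1 : K) + q ^ (d * p ^ N) - 2 = -(1 - q ^ (d * p ^ N)) := by ring
      rw [hrw, norm_neg]
      exact hdec N
    refine squeeze_zero (fun N => norm_nonneg _) hb ?_
    have := (tendsto_pow_atTop_nhds_zero_of_lt_one hη0 hη1).const_mul ‖1 - q‖
    simpa using this
  have hc : Tendsto (fun N : ℕ => (1 + q) / ((1 : K) + q ^ (d * p ^ N))) atTop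
      (nhds ((1 + q) / 2)) :=
    tendsto_const_nhds.div hden hnorm2
  exact ⟨_, hc.mul hS⟩

open Filter

/-- Theorem 2: the fermionic `p`-adic `q`-integrals defining
`E^{(h)}_{n,q,ξ,ψ}`, `E^{(h)}_{n,q^p,ξ^p,ψ}` and `l^{(h)}_{p,q,ξ}(−n, ψ)` (the latter
taken over `X* = X ∖ pX`) all exist, and
`l^{(h)}_{p,q,ξ}(−n, ψ) = E^{(h)}_{n,q,ξ,ψ} − ψ(p) [p]_q^n ([2]_q/[2]_{q^p})
  E^{(h)}_{n,q^p,ξ^p,ψ}`. -/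
theorem padic_twisted_hq_euler_l_interpolation
    {p : ℕ} [Fact p.Prime] (hp : Odd p)
    {K : Type*} [NontriviallyNormedField K] [CompleteSpace K] [IsUltrametricDist K]
    [Algebra ℚ_[p] K] (halg : ∀ x : ℚ_[p], ‖algebraMap ℚ_[p] K x‖ = ‖x‖)
    (q ξ : K) (hq : ‖1 - q‖ < (p : ℝ) ^ (-(1 : ℝ) / ((p : ℝ) - 1)))
    (m : ℕ) (hξ : ξ ^ p ^ m = 1) (h : ℤ) (n : ℕ)
    {d : ℕ} (hd : Odd d) (hdpos : 0 < d) (hpd : ¬ p ∣ d)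
    (c : ℕ) (hcpos : 0 < c) (hcdvd : c ∣ d * p)
    (ψ : ℤ → K) (hψper : ∀ a : ℤ, ψ (a + c) = ψ a)
    (hψmul : ∀ a b : ℤ, ψ (a * b) = ψ a * ψ b) (hψone : ψ 1 = 1)
    (hψzero : ∀ a : ℤ, 1 < Int.gcd a c → ψ a = 0) :
    ∃ E E' L : K,
      Tendsto (fun N : ℕ => ((1 + q) / (1 + q ^ (d * p ^ N))) *
          ∑ a ∈ Finset.range (d * p ^ N),
            ψ (a : ℤ) * q ^ ((h - 1) * (a : ℤ)) * ξ ^ a *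
              ((1 - q ^ a) / (1 - q)) ^ n * (-q) ^ a) atTop (nhds E) ∧
      Tendsto (fun N : ℕ => ((1 + q ^ p) / (1 + (q ^ p) ^ (d * p ^ N))) *
          ∑ a ∈ Finset.range (d * p ^ N),
            ψ (a : ℤ) * (q ^ p) ^ ((h - 1) * (a : ℤ)) * (ξ ^ p) ^ a *
              ((1 - (q ^ p) ^ a) / (1 - q ^ p)) ^ n * (-(q ^ p)) ^ a) atTop (nhds E') ∧
      Tendsto (fun N : ℕ => ((1 + q) / (1 + q ^ (d * p ^ N))) *
          ∑ a ∈ (Finset.range (d * p ^ N)).filter (fun a => ¬ p ∣ a),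
            ψ (a : ℤ) * q ^ ((h - 1) * (a : ℤ)) * ξ ^ a *
              ((1 - q ^ a) / (1 - q)) ^ n * (-q) ^ a) atTop (nhds L) ∧
      L = E - ψ (p : ℤ) * ((1 - q ^ p) / (1 - q)) ^ n * ((1 + q) / (1 + q ^ p)) * E' := by
  have hpp : p.Prime := Fact.out
  -- norm facts transported from ℚ_p
  have hnorm1 : ∀ k : ℕ, ‖(k : K)‖ ≤ 1 := by
    intro k
    rw [← map_natCast (algebraMap ℚ_[p] K) k, halg]
    have h1 := Padic.norm_int_le_one (p := p) (k : ℤ)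
    rwa [Int.cast_natCast] at h1
  have hnormp : ‖(p : K)‖ ≤ (p : ℝ)⁻¹ := by
    rw [← map_natCast (algebraMap ℚ_[p] K) p, halg]
    exact le_of_eq Padic.norm_p
  have hnorm2K : ‖(2 : K)‖ = 1 := by
    have h2 : ((2 : ℕ) : K) = (2 : K) := by norm_num
    rw [← h2, ← map_natCast (algebraMap ℚ_[p] K) 2, halg]
    have hle := Padic.norm_int_le_one (p := p) (2 : ℤ)
    have hcast2 : (((2 : ℤ) : ℚ_[p])) = ((2 : ℕ) : ℚ_[p]) := by norm_num
    rw [hcast2] at hle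
    refine le_antisymm hle (not_lt.mp fun hcon => ?_)
    rw [← hcast2] at hcon
    have hdvd : (p : ℤ) ∣ 2 := (Padic.norm_intCast_lt_one_iff (p := p) (k := 2)).mp hcon
    have hdvd' : p ∣ 2 := by exact_mod_cast hdvd
    have hple := Nat.le_of_dvd (by norm_num) hdvd'
    have hp2 := hpp.two_le
    have hodd := Nat.odd_iff.mp hp
    omega
  have h2K : (2 : K) ≠ 0 := by
    intro hh; rw [hh, norm_zero] at hnorm2K; norm_num at hnorm2K
  -- basic norm facts on q
  have hp1 : (1 : ℝ) < p := by exact_mod_cast hpp.one_lt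
  have hbound1 : (p : ℝ) ^ (-(1 : ℝ) / ((p : ℝ) - 1)) ≤ 1 := by
    apply Real.rpow_le_one_of_one_le_of_nonpos hp1.le
    apply div_nonpos_of_nonpos_of_nonneg <;> [norm_num; linarith]
  have hε1 : ‖1 - q‖ < 1 := lt_of_lt_of_le hq hbound1
  have hqnorm : ‖q‖ = 1 := PTHQ.norm_eq_one hε1
  have h1qpnorm : ‖(1 : K) + q ^ p‖ = 1 := by
    have hlt : ‖q ^ p - 1‖ < ‖(2 : K)‖ := by
      rw [hnorm2K, norm_sub_rev]
      exact lt_of_le_of_lt (PTHQ.norm_one_sub_pow_le hqnorm.le p) hε1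
    have hrw : (1 : K) + q ^ p = 2 + (q ^ p - 1) := by ring
    rw [hrw, norm_add_eq_max_of_norm_ne_norm hlt.ne', max_eq_left hlt.le, hnorm2K]
  have h1qp : (1 : K) + q ^ p ≠ 0 := by
    intro hh; rw [hh, norm_zero] at h1qpnorm; norm_num at h1qpnorm
  -- periodicity machinery for ψ
  have aux : ∀ (x : ℤ) (k : ℤ), ψ (x + (c : ℤ) * k) = ψ x := by
    intro x k
    induction k using Int.induction_on with
    | zero => simp
    | succ k ih =>
      have hre : x + (c : ℤ) * ((k : ℤ) + 1) = (x + (c : ℤ) * (k : ℤ)) + (c : ℤ) := by ring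
      rw [hre, hψper, ih]
    | pred k ih =>
      have hre : x + (c : ℤ) * (-(k : ℤ) - 1) + (c : ℤ) = x + (c : ℤ) * (-(k : ℤ)) := by ring
      have h2 := hψper (x + (c : ℤ) * (-(k : ℤ) - 1))
      rw [hre] at h2
      rw [← h2, ih]
  have hψmod : ∀ a : ℤ, ψ a = ψ (a % (c : ℤ)) := by
    intro a
    conv_lhs => rw [← Int.emod_add_mul_ediv a (c : ℤ)]
    exact aux _ _
  have hcne : (c : ℤ) ≠ 0 := by exact_mod_cast hcpos.ne'
  obtain ⟨B, hB⟩ : ∃ B : ℝ, ∀ a : ℤ, ‖ψ a‖ ≤ B := by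
    have hne : ((Finset.range c).image (fun i : ℕ => ‖ψ (i : ℤ)‖)).Nonempty :=
      ⟨‖ψ ((0 : ℕ) : ℤ)‖, Finset.mem_image.mpr ⟨0, Finset.mem_range.mpr hcpos, rfl⟩⟩
    refine ⟨((Finset.range c).image (fun i : ℕ => ‖ψ (i : ℤ)‖)).max' hne, fun a => ?_⟩
    rw [hψmod a]
    have h0 : 0 ≤ a % (c : ℤ) := Int.emod_nonneg a hcne
    have hlt : a % (c : ℤ) < c := Int.emod_lt_of_pos a (by exact_mod_cast hcpos)
    have htn : a % (c : ℤ) = (((a % (c : ℤ)).toNat : ℕ) : ℤ) := (Int.toNat_of_nonneg h0).symm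
    rw [htn]
    apply Finset.le_max'
    exact Finset.mem_image.mpr ⟨(a % (c : ℤ)).toNat, Finset.mem_range.mpr (by omega), rfl⟩
  have hper' : ∀ a : ℤ, ψ (a + ((d * p : ℕ) : ℤ)) = ψ a := by
    obtain ⟨t, ht⟩ := hcdvd
    intro a
    have hre : ((d * p : ℕ) : ℤ) = (c : ℤ) * (t : ℤ) := by push_cast [ht]; ring
    rw [hre]
    exact aux a t
  -- the two E-limits
  obtain ⟨E, hE⟩ := PTHQ.conv hpp hp hnorm1 hnormp h2K q ξ hq m hξ h n hd hdpos ψ B hB hper'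
  have hq' : ‖1 - q ^ p‖ < (p : ℝ) ^ (-(1 : ℝ) / ((p : ℝ) - 1)) :=
    lt_of_le_of_lt (PTHQ.norm_one_sub_pow_le hqnorm.le p) hq
  have hξ' : (ξ ^ p) ^ p ^ m = 1 := by
    rw [← pow_mul, mul_comm, pow_mul, hξ, one_pow]
  obtain ⟨E', hE'⟩ := PTHQ.conv hpp hp hnorm1 hnormp h2K (q ^ p) (ξ ^ p) hq' m hξ' h n hd
    hdpos ψ B hB hper'
  refine ⟨E, E', E - ψ (p : ℤ) * ((1 - q ^ p) / (1 - q)) ^ n * ((1 + q) / (1 + q ^ p)) * E',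
    hE, hE', ?_, rfl⟩
  -- the filtered-sum limit
  have hshift : Tendsto (fun N : ℕ => ((1 + q ^ p) / (1 + (q ^ p) ^ (d * p ^ (N - 1)))) *
      PTHQ.S ψ (q ^ p) (ξ ^ p) h n d p (N - 1)) atTop (nhds E') :=
    hE'.comp (tendsto_sub_atTop_nat 1)
  have hcomb : Tendsto (fun N : ℕ =>
      ((1 + q) / (1 + q ^ (d * p ^ N))) * PTHQ.S ψ q ξ h n d p N -
        (ψ (p : ℤ) * ((1 - q ^ p) / (1 - q)) ^ n * ((1 + q) / (1 + q ^ p))) *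
          (((1 + q ^ p) / (1 + (q ^ p) ^ (d * p ^ (N - 1)))) *
            PTHQ.S ψ (q ^ p) (ξ ^ p) h n d p (N - 1))) atTop
      (nhds (E - ψ (p : ℤ) * ((1 - q ^ p) / (1 - q)) ^ n * ((1 + q) / (1 + q ^ p)) * E')) := by
    have := hE.sub (hshift.const_mul
      (ψ (p : ℤ) * ((1 - q ^ p) / (1 - q)) ^ n * ((1 + q) / (1 + q ^ p))))
    simpa [mul_assoc] using this
  refine Tendsto.congr' ?_ hcomb
  filter_upwards [eventually_ge_atTop 1] with N hN
  obtain ⟨M, rfl⟩ : ∃ M, N = M + 1 := ⟨N - 1, by omega⟩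
  simp only [Nat.add_sub_cancel]
  -- per-term identity for multiples of p
  have hterm : ∀ b : ℕ, PTHQ.g ψ q ξ h n (p * b)
      = ψ (p : ℤ) * ((1 - q ^ p) / (1 - q)) ^ n * PTHQ.g ψ (q ^ p) (ξ ^ p) h n b := by
    intro b
    have hψpb : ψ ((p * b : ℕ) : ℤ) = ψ (p : ℤ) * ψ (b : ℤ) := by
      push_cast
      rw [hψmul]
    have hqpb : q ^ ((h - 1) * ((p * b : ℕ) : ℤ)) = (q ^ p) ^ ((h - 1) * (b : ℤ)) := by
      have hexp : (h - 1) * ((p * b : ℕ) : ℤ) = ((p : ℕ) : ℤ) * ((h - 1) * (b : ℤ)) := by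
        push_cast; ring
      rw [hexp, zpow_mul q ((p : ℕ) : ℤ) ((h - 1) * (b : ℤ)), zpow_natCast]
    have hξpb : ξ ^ (p * b) = (ξ ^ p) ^ b := pow_mul ξ p b
    have hnegpb : (-q) ^ (p * b) = (-(q ^ p)) ^ b := by rw [pow_mul, hp.neg_pow]
    have hfrac : (1 - q ^ (p * b)) / (1 - q)
        = (1 - q ^ p) / (1 - q) * ((1 - (q ^ p) ^ b) / (1 - q ^ p)) := by
      by_cases hqp : (1 : K) - q ^ p = 0
      · have h1 : q ^ p = 1 := by rw [sub_eq_zero] at hqp; exact hqp.symm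
        simp [pow_mul, h1]
      · rw [pow_mul, div_mul_div_comm, mul_comm ((1 : K) - q) ((1 : K) - q ^ p),
          mul_div_mul_left _ _ hqp]
    rw [PTHQ.g, PTHQ.g, hψpb, hqpb, hξpb, hnegpb, hfrac, mul_pow]
    ring
  -- reindexing the multiples of p
  have hdvdsum : ∑ a ∈ (Finset.range (d * p ^ (M + 1))).filter (fun a => p ∣ a),
      PTHQ.g ψ q ξ h n a = ∑ b ∈ Finset.range (d * p ^ M), PTHQ.g ψ q ξ h n (p * b) := by
    refine (Finset.sum_nbij' (i := fun b => p * b) (j := fun a => a / p)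
      ?_ ?_ ?_ ?_ (fun b _ => rfl)).symm
    · intro b hb
      rw [Finset.mem_range] at hb
      rw [Finset.mem_filter, Finset.mem_range]
      refine ⟨?_, Dvd.intro b rfl⟩
      calc p * b < p * (d * p ^ M) := (Nat.mul_lt_mul_left hpp.pos).mpr hb
        _ = d * p ^ (M + 1) := by rw [pow_succ]; ring
    · intro a ha
      rw [Finset.mem_filter, Finset.mem_range] at ha
      obtain ⟨hlt, hdv⟩ := ha
      obtain ⟨t, rfl⟩ := hdv
      simp only [Finset.mem_range, Nat.mul_div_cancel_left t hpp.pos]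
      rw [pow_succ] at hlt
      have hre : d * (p ^ M * p) = p * (d * p ^ M) := by ring
      rw [hre] at hlt
      exact Nat.lt_of_mul_lt_mul_left hlt
    · intro b _
      exact Nat.mul_div_cancel_left b hpp.pos
    · intro a ha
      rw [Finset.mem_filter] at ha
      exact Nat.mul_div_cancel' ha.2
  have hPsum : ∑ a ∈ (Finset.range (d * p ^ (M + 1))).filter (fun a => p ∣ a),
      PTHQ.g ψ q ξ h n a
      = ψ (p : ℤ) * ((1 - q ^ p) / (1 - q)) ^ n * PTHQ.S ψ (q ^ p) (ξ ^ p) h n d p M := by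
    rw [hdvdsum, PTHQ.S, Finset.mul_sum]
    exact Finset.sum_congr rfl fun b _ => hterm b
  have hfilterSum : ∑ a ∈ (Finset.range (d * p ^ (M + 1))).filter (fun a => ¬ p ∣ a),
      PTHQ.g ψ q ξ h n a
      = PTHQ.S ψ q ξ h n d p (M + 1)
        - ψ (p : ℤ) * ((1 - q ^ p) / (1 - q)) ^ n * PTHQ.S ψ (q ^ p) (ξ ^ p) h n d p M := by
    rw [eq_sub_iff_add_eq, ← hPsum, add_comm]
    exact Finset.sum_filter_add_sum_filter_not _ _ _
  have hpowrw : (q ^ p) ^ (d * p ^ M) = q ^ (d * p ^ (M + 1)) := by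
    rw [← pow_mul]
    congr 1
    rw [pow_succ]; ring
  have hcN : (1 + q) / (1 + q ^ (d * p ^ (M + 1)))
      = (1 + q) / (1 + q ^ p) * ((1 + q ^ p) / (1 + (q ^ p) ^ (d * p ^ M))) := by
    rw [hpowrw, div_mul_div_comm, mul_comm ((1 : K) + q) ((1 : K) + q ^ p),
      mul_div_mul_left _ _ h1qp]
  show ((1 + q) / (1 + q ^ (d * p ^ (M + 1)))) * PTHQ.S ψ q ξ h n d p (M + 1) -
      (ψ (p : ℤ) * ((1 - q ^ p) / (1 - q)) ^ n * ((1 + q) / (1 + q ^ p))) *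
        (((1 + q ^ p) / (1 + (q ^ p) ^ (d * p ^ M))) * PTHQ.S ψ (q ^ p) (ξ ^ p) h n d p M)
      = ((1 + q) / (1 + q ^ (d * p ^ (M + 1)))) *
          ∑ a ∈ (Finset.range (d * p ^ (M + 1))).filter (fun a => ¬ p ∣ a),
            PTHQ.g ψ q ξ h n a
  rw [hfilterSum, hcN]
  ring
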